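/- arXiv:1703.00702 — 2 statements merged into one kernel-verified Lean document; each statement's English description precedes it below -/
import Mathlib

section
/- Let k be a field and n ≥ 1 a natural number. For every matrix A ∈ GL_n(k[T,T⁻¹]) (invertible n×n matrix over the Laurent polynomial ring) there exist a matrix U ∈ GL_n(k[T,T⁻¹]) such that all entries of U and of U⁻¹ lie in the k-subalgebra of k[T,T⁻¹] generated by T⁻¹, a matrix V ∈ GL_n(k[T,T⁻¹]) such that all entries of V and of V⁻¹ lie in the k-subalgebra generated by T, and a nonincreasing sequence of integers a₁ ≥ a₂ ≥ … ≥ a_n, such that A = U · diag(T^{a₁}, …, T^{a_n}) · V. (This is the matrix form, via the standard affine cover of the projective line, of Grothendieck's theorem that every vector bundle on ℙ¹_k is a direct sum of line bundles O(a_i), equivalently of the classification of Zariski-locally trivial GL_n-torsors on ℙ¹_k.) -/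
open Matrix LaurentPolynomial

namespace BGaux

variable {k : Type*} [Field k]

noncomputable instance : CoeFun (LaurentPolynomial k) (fun _ => ℤ → k) := ⟨fun p => p.coeff⟩

/-- `Finsupp.single` with the `LaurentPolynomial` type ascribed. -/
noncomputable def sg (a : ℤ) (r : k) : LaurentPolynomial k := AddMonoidAlgebra.single a r

theorem sg_apply (a : ℤ) (r : k) (m : ℤ) : sg a r m = if a = m then r else 0 :=
  Finsupp.single_apply

theorem coeff_sub (p q : LaurentPolynomial k) (m : ℤ) : (p - q) m = p m - q m := by
  rw [AddMonoidAlgebra.coeff_sub, Finsupp.sub_apply]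

theorem coeff_add (p q : LaurentPolynomial k) (m : ℤ) : (p + q) m = p m + q m := by
  rw [AddMonoidAlgebra.coeff_add, Finsupp.add_apply]

theorem sg_mul_apply (a : ℤ) (r : k) (g : LaurentPolynomial k) (y : ℤ) :
    (sg a r * g) y = r * g (-a + y) :=
  AddMonoidAlgebra.coeff_single_mul_apply g r a y

theorem sg_eq_C_mul_T (r : k) (a : ℤ) : sg a r = C r * T a := single_eq_C_mul_T r a

theorem coeff_zero (m : ℤ) : (0 : LaurentPolynomial k) m = 0 := rfl

theorem eq_sum_sg (p : LaurentPolynomial k) : p = ∑ m ∈ p.coeff.support, sg m (p m) := by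
  refine AddMonoidAlgebra.coeff_injective (Finsupp.ext fun a => ?_)
  rw [AddMonoidAlgebra.coeff_sum, Finsupp.finset_sum_apply]
  rw [Finset.sum_congr rfl (fun m _ => sg_apply m (p m) a)]
  rw [Finset.sum_ite_eq' p.coeff.support a (fun m => p m)]
  split
  · rfl
  · exact (Finsupp.notMem_support_iff.mp ‹_›)

/-- upper bound on coefficients of a product -/
theorem coeff_mul_bound {f g : LaurentPolynomial k} {a b : ℤ}
    (hf : ∀ m, a < m → f m = 0) (hg : ∀ m, b < m → g m = 0) :
    ∀ m, a + b < m → (f * g) m = 0 := by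
  intro m hm
  by_contra h
  have hmem : m ∈ (f * g).coeff.support := Finsupp.mem_support_iff.mpr h
  have h2 := AddMonoidAlgebra.support_coeff_mul_subset f g hmem
  rw [Finset.mem_add] at h2
  obtain ⟨x, hx, y, hy, rfl⟩ := h2
  have hxa : x ≤ a := by
    by_contra hc
    exact (Finsupp.mem_support_iff.mp hx) (hf x (lt_of_not_ge hc))
  have hyb : y ≤ b := by
    by_contra hc
    exact (Finsupp.mem_support_iff.mp hy) (hg y (lt_of_not_ge hc))
  omega

theorem coeff_mul_bound_low {f g : LaurentPolynomial k} {a b : ℤ}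
    (hf : ∀ m, m < a → f m = 0) (hg : ∀ m, m < b → g m = 0) :
    ∀ m, m < a + b → (f * g) m = 0 := by
  intro m hm
  by_contra h
  have hmem : m ∈ (f * g).coeff.support := Finsupp.mem_support_iff.mpr h
  have h2 := AddMonoidAlgebra.support_coeff_mul_subset f g hmem
  rw [Finset.mem_add] at h2
  obtain ⟨x, hx, y, hy, rfl⟩ := h2
  have hxa : a ≤ x := by
    by_contra hc
    exact (Finsupp.mem_support_iff.mp hx) (hf x (lt_of_not_ge hc))
  have hyb : b ≤ y := by
    by_contra hc
    exact (Finsupp.mem_support_iff.mp hy) (hg y (lt_of_not_ge hc))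
  omega

theorem coeff_mul_top {f g : LaurentPolynomial k} {a b : ℤ}
    (hf : ∀ m, a < m → f m = 0) (hg : ∀ m, b < m → g m = 0) :
    (f * g) (a + b) = f a * g b := by
  have hfd : f = (f - sg a (f a)) + sg a (f a) := by ring
  have hf' : ∀ m, a - 1 < m → (f - sg a (f a)) m = 0 := by
    intro m hm
    rw [coeff_sub, sg_apply]
    rcases eq_or_lt_of_le (show a ≤ m by omega) with rfl | h
    · rw [if_pos rfl, sub_self]
    · rw [if_neg (by omega), hf m h, sub_zero]
  calc (f * g) (a + b)
      = ((f - sg a (f a)) * g) (a + b) + (sg a (f a) * g) (a + b) := by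
        rw [← coeff_add, ← add_mul, ← hfd]
    _ = f a * g b := by
        rw [coeff_mul_bound hf' hg (a + b) (by omega), sg_mul_apply]
        rw [zero_add, neg_add_cancel_left]

theorem coeff_mul_bot {f g : LaurentPolynomial k} {a b : ℤ}
    (hf : ∀ m, m < a → f m = 0) (hg : ∀ m, m < b → g m = 0) :
    (f * g) (a + b) = f a * g b := by
  have hfd : f = (f - sg a (f a)) + sg a (f a) := by ring
  have hf' : ∀ m, m < a + 1 → (f - sg a (f a)) m = 0 := by
    intro m hm
    rw [coeff_sub, sg_apply]
    rcases eq_or_lt_of_le (show m ≤ a by omega) with rfl | h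
    · rw [if_pos rfl, sub_self]
    · rw [if_neg (by omega), hf m h, sub_zero]
  calc (f * g) (a + b)
      = ((f - sg a (f a)) * g) (a + b) + (sg a (f a) * g) (a + b) := by
        rw [← coeff_add, ← add_mul, ← hfd]
    _ = f a * g b := by
        rw [coeff_mul_bound_low hf' hg (a + b) (by omega), sg_mul_apply]
        rw [zero_add, neg_add_cancel_left]

theorem coeff_one (m : ℤ) : (1 : LaurentPolynomial k) m = if 0 = m then 1 else 0 := by
  rw [← single_zero_one_eq_one, AddMonoidAlgebra.coeff_single, Finsupp.single_apply]

theorem coeff_prod_bound {ι : Type*} (s : Finset ι) (f : ι → LaurentPolynomial k) (c : ι → ℤ)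
    (h : ∀ i ∈ s, ∀ m, c i < m → f i m = 0) :
    ∀ m, (∑ i ∈ s, c i) < m → (∏ i ∈ s, f i) m = 0 := by
  induction s using Finset.cons_induction with
  | empty =>
    intro m hm
    rw [Finset.sum_empty] at hm
    rw [Finset.prod_empty, coeff_one, if_neg (by omega)]
  | cons a s ha ih =>
    intro m hm
    rw [Finset.prod_cons]
    refine coeff_mul_bound (h a (Finset.mem_cons_self a s))
      (ih fun i hi => h i (Finset.mem_cons_of_mem hi)) m ?_
    rwa [Finset.sum_cons] at hm

theorem coeff_prod_top {ι : Type*} (s : Finset ι) (f : ι → LaurentPolynomial k) (c : ι → ℤ)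
    (h : ∀ i ∈ s, ∀ m, c i < m → f i m = 0) :
    (∏ i ∈ s, f i) (∑ i ∈ s, c i) = ∏ i ∈ s, (f i) (c i) := by
  induction s using Finset.cons_induction with
  | empty =>
    rw [Finset.prod_empty, Finset.sum_empty, Finset.prod_empty, coeff_one, if_pos rfl]
  | cons a s ha ih =>
    rw [Finset.prod_cons, Finset.sum_cons, Finset.prod_cons,
      coeff_mul_top (h a (Finset.mem_cons_self a s))
        (coeff_prod_bound s f c fun i hi => h i (Finset.mem_cons_of_mem hi)),
      ih fun i hi => h i (Finset.mem_cons_of_mem hi)]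

theorem coeff_C_mul (r : k) (p : LaurentPolynomial k) (m : ℤ) :
    (C r * p) m = r * p m := by
  have : (C r : LaurentPolynomial k) = AddMonoidAlgebra.single 0 r := by
    rw [single_eq_C_mul_T, T_zero, mul_one]
  rw [this, AddMonoidAlgebra.coeff_single_mul_apply, neg_zero, zero_add]

theorem coeff_intCast_mul (z : ℤ) (p : LaurentPolynomial k) (m : ℤ) :
    ((z : LaurentPolynomial k) * p) m = (z : k) * p m := by
  have : ((z : ℤ) : LaurentPolynomial k) = C ((z : ℤ) : k) := by
    rw [← map_intCast (C : k →+* LaurentPolynomial k)]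
  rw [this, coeff_C_mul]

variable {n : ℕ}

theorem det_coeff_bound (B : Matrix (Fin n) (Fin n) (LaurentPolynomial k)) (e : Fin n → ℤ)
    (h : ∀ i j m, e j < m → B i j m = 0) :
    ∀ m, (∑ j, e j) < m → B.det m = 0 := by
  intro m hm
  rw [Matrix.det_apply']
  rw [AddMonoidAlgebra.coeff_sum, Finsupp.finset_sum_apply]
  refine Finset.sum_eq_zero fun σ _ => ?_
  rw [coeff_intCast_mul]
  rw [coeff_prod_bound Finset.univ (fun i => B (σ i) i) e (fun i _ => h (σ i) i) m hm]
  ring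

theorem det_coeff_top (B : Matrix (Fin n) (Fin n) (LaurentPolynomial k)) (e : Fin n → ℤ)
    (h : ∀ i j m, e j < m → B i j m = 0) :
    B.det (∑ j, e j) = (Matrix.of fun i j => B i j (e j) : Matrix (Fin n) (Fin n) k).det := by
  rw [Matrix.det_apply', Matrix.det_apply' (R := k)]
  rw [AddMonoidAlgebra.coeff_sum, Finsupp.finset_sum_apply]
  refine Finset.sum_congr rfl fun σ _ => ?_
  rw [coeff_intCast_mul,
    coeff_prod_top Finset.univ (fun i => B (σ i) i) e (fun i _ => h (σ i) i)]
  rfl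

theorem unit_eq_C {w : LaurentPolynomial k} (hw : IsUnit w)
    (hbd : ∀ m, 0 < m → w m = 0) (h0 : w 0 ≠ 0) : w = C (w 0) := by
  obtain ⟨v, hv⟩ := hw.exists_right_inv
  have hw0 : w ≠ 0 := fun h => h0 (h ▸ coeff_zero 0)
  have hv0 : v ≠ 0 := by
    rintro rfl
    rw [mul_zero] at hv
    have h1 := congrArg (fun p : LaurentPolynomial k => p 0) hv
    simp only [coeff_zero, coeff_one, if_pos rfl] at h1
    exact zero_ne_one h1
  have hsw := Finsupp.support_nonempty_iff.mpr (AddMonoidAlgebra.coeff_eq_zero.not.mpr hw0)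
  have hsv := Finsupp.support_nonempty_iff.mpr (AddMonoidAlgebra.coeff_eq_zero.not.mpr hv0)
  set tv := v.coeff.support.max' hsv with htv
  have hvbd : ∀ m, tv < m → v m = 0 := by
    intro m hm
    by_contra h
    exact absurd (v.coeff.support.le_max' m (Finsupp.mem_support_iff.mpr h)) (by omega)
  have hwv_tv : (w * v) (0 + tv) = w 0 * v tv := coeff_mul_top hbd hvbd
  have hvtv : v tv ≠ 0 := Finsupp.mem_support_iff.mp (v.coeff.support.max'_mem hsv)
  have htv0 : tv = 0 := by
    by_contra h
    rw [hv, zero_add, coeff_one, if_neg (fun hh => h hh.symm)] at hwv_tv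
    exact mul_ne_zero h0 hvtv hwv_tv.symm
  set lw := w.coeff.support.min' hsw with hlw
  set lv := v.coeff.support.min' hsv with hlv
  have hlw0 : lw ≤ 0 := w.coeff.support.min'_le 0 (Finsupp.mem_support_iff.mpr h0)
  have hlv0 : lv ≤ 0 := htv0 ▸ v.coeff.support.min'_le tv (v.coeff.support.max'_mem hsv)
  have hwlow : ∀ m, m < lw → w m = 0 := by
    intro m hm
    by_contra h
    exact absurd (w.coeff.support.min'_le m (Finsupp.mem_support_iff.mpr h)) (by omega)
  have hvlow : ∀ m, m < lv → v m = 0 := by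
    intro m hm
    by_contra h
    exact absurd (v.coeff.support.min'_le m (Finsupp.mem_support_iff.mpr h)) (by omega)
  have hbot : (w * v) (lw + lv) = w lw * v lv := coeff_mul_bot hwlow hvlow
  have hwlw : w lw ≠ 0 := Finsupp.mem_support_iff.mp (w.coeff.support.min'_mem hsw)
  have hvlv : v lv ≠ 0 := Finsupp.mem_support_iff.mp (v.coeff.support.min'_mem hsv)
  have hlwlv : lw + lv = 0 := by
    by_contra h
    rw [hv, coeff_one, if_neg (fun hh => h hh.symm)] at hbot
    exact mul_ne_zero hwlw hvlv hbot.symm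
  have hlwe : lw = 0 := by omega
  have hsub : w.coeff.support ⊆ {0} := by
    intro x hx
    have h1 : lw ≤ x := w.coeff.support.min'_le x hx
    have h2 : ¬ 0 < x := fun h => Finsupp.mem_support_iff.mp hx (hbd x h)
    simp only [Finset.mem_singleton]
    omega
  have h3 := Finsupp.support_subset_singleton.mp hsub
  exact AddMonoidAlgebra.coeff_injective (h3.trans (by rw [← AddMonoidAlgebra.coeff_single, single_eq_C_mul_T, T_zero, mul_one]))

theorem mem_adjoin_T_neg {p : LaurentPolynomial k} (h : ∀ m, 0 < m → p m = 0) :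
    p ∈ Algebra.adjoin k {(T (-1) : LaurentPolynomial k)} := by
  rw [eq_sum_sg p]
  refine Subalgebra.sum_mem _ fun m hm => ?_
  have hm0 : m ≤ 0 := by
    by_contra hc
    exact Finsupp.mem_support_iff.mp hm (h m (by omega))
  rw [sg_eq_C_mul_T]
  refine mul_mem ?_ ?_
  · rw [C_eq_algebraMap]; exact Subalgebra.algebraMap_mem _ _
  · have : (T m : LaurentPolynomial k) = (T (-1)) ^ (-m).toNat := by
      rw [T_pow]
      congr 1
      omega
    rw [this]
    exact pow_mem (Algebra.self_mem_adjoin_singleton k _) _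

theorem mem_adjoin_T_pos {p : LaurentPolynomial k} (h : ∀ m, m < 0 → p m = 0) :
    p ∈ Algebra.adjoin k {(T 1 : LaurentPolynomial k)} := by
  rw [eq_sum_sg p]
  refine Subalgebra.sum_mem _ fun m hm => ?_
  have hm0 : 0 ≤ m := by
    by_contra hc
    exact Finsupp.mem_support_iff.mp hm (h m (by omega))
  rw [sg_eq_C_mul_T]
  refine mul_mem ?_ ?_
  · rw [C_eq_algebraMap]; exact Subalgebra.algebraMap_mem _ _
  · have : (T m : LaurentPolynomial k) = (T 1) ^ m.toNat := by
      rw [T_pow]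
      congr 1
      omega
    rw [this]
    exact pow_mem (Algebra.self_mem_adjoin_singleton k _) _

theorem det_mem {S : Subalgebra k (LaurentPolynomial k)}
    {M : Matrix (Fin n) (Fin n) (LaurentPolynomial k)}
    (h : ∀ i j, M i j ∈ S) : M.det ∈ S := by
  rw [Matrix.det_apply']
  exact Subalgebra.sum_mem _ fun σ _ =>
    mul_mem (intCast_mem S _) (Subalgebra.prod_mem _ fun i _ => h _ _)

theorem entries_mul_mem {S : Subalgebra k (LaurentPolynomial k)}
    {M N : Matrix (Fin n) (Fin n) (LaurentPolynomial k)}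
    (hM : ∀ i j, M i j ∈ S) (hN : ∀ i j, N i j ∈ S) : ∀ i j, (M * N) i j ∈ S := by
  intro i j
  rw [Matrix.mul_apply]
  exact Subalgebra.sum_mem _ fun m _ => mul_mem (hM i m) (hN m j)

theorem inv_entries_mem {S : Subalgebra k (LaurentPolynomial k)}
    {M : Matrix (Fin n) (Fin n) (LaurentPolynomial k)} {c : k} (hc : c ≠ 0)
    (hdet : M.det = C c) (h : ∀ i j, M i j ∈ S) :
    IsUnit M.det ∧ ∀ i j, M⁻¹ i j ∈ S := by
  have hCu : IsUnit (C c : LaurentPolynomial k) := (isUnit_iff_ne_zero.mpr hc).map C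
  have hu : IsUnit M.det := hdet ▸ hCu
  refine ⟨hu, fun i j => ?_⟩
  have hinv : Ring.inverse M.det = C c⁻¹ := by
    rw [hdet]
    have h1 := Ring.inverse_unit hCu.unit
    rw [hCu.unit_spec] at h1
    rw [h1]
    refine Units.inv_eq_of_mul_eq_one_right ?_
    rw [hCu.unit_spec, ← _root_.map_mul, mul_inv_cancel₀ hc, _root_.map_one]
  rw [Matrix.inv_def, Matrix.smul_apply, hinv, smul_eq_mul]
  refine mul_mem ?_ ?_
  · rw [C_eq_algebraMap]; exact Subalgebra.algebraMap_mem _ _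
  · rw [Matrix.adjugate_apply]
    refine det_mem fun i' j' => ?_
    rw [Matrix.updateRow_apply]
    rcases eq_or_ne i' j with rfl | hne
    · rw [if_pos rfl]
      rcases eq_or_ne j' i with rfl | hne'
      · rw [Pi.single_eq_same]; exact one_mem _
      · rw [Pi.single_eq_of_ne hne']; exact zero_mem _
    · rw [if_neg hne]; exact h i' j'

theorem C_eq_sg (r : k) : (C r : LaurentPolynomial k) = sg 0 r := by
  rw [sg_eq_C_mul_T, T_zero, mul_one]

theorem mul_sg_apply (f : LaurentPolynomial k) (a : ℤ) (r : k) (y : ℤ) :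
    (f * sg a r) y = f (y - a) * r := by
  rw [sub_eq_add_neg]; exact AddMonoidAlgebra.coeff_mul_single_apply f r a y

theorem coeff_mul_C (p : LaurentPolynomial k) (r : k) (m : ℤ) :
    (p * C r) m = p m * r := by
  rw [C_eq_sg, mul_sg_apply, sub_zero]

theorem loop {n : ℕ} : ∀ (N : ℕ) (B : Matrix (Fin n) (Fin n) (LaurentPolynomial k))
    (e : Fin n → ℤ) (d₀ : ℤ), B.det d₀ ≠ 0 →
    (∀ i j, ∀ m, e j < m → B i j m = 0) →
    (∑ j, e j) - d₀ ≤ (N : ℤ) →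
    ∃ (W : Matrix (Fin n) (Fin n) (LaurentPolynomial k)) (e' : Fin n → ℤ) (c : k),
      c ≠ 0 ∧ W.det = C c ∧
      (∀ i j, W i j ∈ Algebra.adjoin k {(T 1 : LaurentPolynomial k)}) ∧
      (∀ i j, ∀ m, e' j < m → (B * W) i j m = 0) ∧
      (Matrix.of fun i j => (B * W) i j (e' j) : Matrix (Fin n) (Fin n) k).det ≠ 0 := by
  have finish : ∀ (B : Matrix (Fin n) (Fin n) (LaurentPolynomial k)) (e : Fin n → ℤ),
      (∀ i j, ∀ m, e j < m → B i j m = 0) →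
      (Matrix.of fun i j => B i j (e j) : Matrix (Fin n) (Fin n) k).det ≠ 0 →
      ∃ (W : Matrix (Fin n) (Fin n) (LaurentPolynomial k)) (e' : Fin n → ℤ) (c : k),
      c ≠ 0 ∧ W.det = C c ∧
      (∀ i j, W i j ∈ Algebra.adjoin k {(T 1 : LaurentPolynomial k)}) ∧
      (∀ i j, ∀ m, e' j < m → (B * W) i j m = 0) ∧
      (Matrix.of fun i j => (B * W) i j (e' j) : Matrix (Fin n) (Fin n) k).det ≠ 0 := by
    intro B e hdeg hlead
    refine ⟨1, e, 1, one_ne_zero, by rw [Matrix.det_one, _root_.map_one], fun i j => ?_, ?_, ?_⟩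
    · rw [Matrix.one_apply]
      split
      · exact one_mem _
      · exact zero_mem _
    · intro i j m hm
      rw [Matrix.mul_one]
      exact hdeg i j m hm
    · simpa only [Matrix.mul_one] using hlead
  intro N
  induction N with
  | zero =>
    intro B e d₀ hd₀ hdeg hN
    have hle : d₀ ≤ ∑ j, e j := by
      by_contra hc
      exact hd₀ (det_coeff_bound B e hdeg d₀ (by omega))
    have heq : (∑ j, e j) = d₀ := by omega
    refine finish B e hdeg ?_
    rw [← det_coeff_top B e hdeg, heq]
    exact hd₀
  | succ N ih =>
    intro B e d₀ hd₀ hdeg hN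
    by_cases hM : (Matrix.of fun i j => B i j (e j) : Matrix (Fin n) (Fin n) k).det = 0
    swap
    · exact finish B e hdeg hM
    classical
    obtain ⟨lam, hlam0, hlamv⟩ := Matrix.exists_mulVec_eq_zero_iff.mpr hM
    set s : Finset (Fin n) := Finset.univ.filter (fun j => lam j ≠ 0) with hs_def
    have hs : s.Nonempty := by
      obtain ⟨j, hj⟩ := Function.ne_iff.mp hlam0
      exact ⟨j, Finset.mem_filter.mpr ⟨Finset.mem_univ j, hj⟩⟩
    obtain ⟨j₀, hj₀s, hj₀max⟩ := Finset.exists_max_image s e hs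
    have hlamj₀ : lam j₀ ≠ 0 := (Finset.mem_filter.mp hj₀s).2
    set w : Fin n → LaurentPolynomial k := fun i => sg (e j₀ - e i) (lam i) with hw
    set W₁ : Matrix (Fin n) (Fin n) (LaurentPolynomial k) := Matrix.updateCol 1 j₀ w
      with hW₁
    have hW₁det : W₁.det = C (lam j₀) := by
      have h1 := Matrix.cramer_apply (A := (1 : Matrix (Fin n) (Fin n) (LaurentPolynomial k)))
        (b := w) j₀
      rw [Matrix.cramer_one] at h1
      rw [hW₁, ← h1]
      show w j₀ = C (lam j₀)
      rw [hw]
      show sg (e j₀ - e j₀) (lam j₀) = C (lam j₀)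
      rw [sub_self, C_eq_sg]
    have hprod_ne : ∀ i j, j ≠ j₀ → (B * W₁) i j = B i j := by
      intro i j hj
      rw [Matrix.mul_apply]
      rw [Finset.sum_congr rfl fun m _ => by
        rw [hW₁, Matrix.updateCol_ne hj]]
      rw [← Matrix.mul_apply, Matrix.mul_one]
    have hprodj₀ : ∀ i x, (B * W₁) i j₀ x = ∑ m, B i m ((x - e j₀) + e m) * lam m := by
      intro i x
      rw [Matrix.mul_apply, AddMonoidAlgebra.coeff_sum, Finsupp.finset_sum_apply]
      refine Finset.sum_congr rfl fun m _ => ?_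
      rw [hW₁, Matrix.updateCol_self, hw]
      show (B i m * sg (e j₀ - e m) (lam m)) x = _
      rw [mul_sg_apply]
      congr 2
      omega
    have hdeg' : ∀ i j, ∀ m, (Function.update e j₀ (e j₀ - 1)) j < m →
        (B * W₁) i j m = 0 := by
      intro i j m hm
      rcases eq_or_ne j j₀ with rfl | hj
      · rw [Function.update_self] at hm
        rw [hprodj₀]
        rcases (show e j < m ∨ e j = m by omega) with h | h
        · refine Finset.sum_eq_zero fun x _ => ?_
          rw [hdeg i x _ (by omega), zero_mul]
        · have h0 : ∑ x, B i x (e x) * lam x = 0 := by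
            have h1 := congrFun hlamv i
            simpa [Matrix.mulVec, dotProduct] using h1
          rw [Finset.sum_congr rfl fun x _ => by rw [show m - e j + e x = e x by omega]]
          exact h0
      · rw [hprod_ne i j hj]
        rw [Function.update_of_ne hj] at hm
        exact hdeg i j m hm
    have hdet' : (B * W₁).det d₀ ≠ 0 := by
      rw [Matrix.det_mul, hW₁det, coeff_mul_C]
      exact mul_ne_zero hd₀ hlamj₀
    have hsum' : (∑ j, (Function.update e j₀ (e j₀ - 1)) j) = (∑ j, e j) - 1 := by
      rw [Finset.sum_update_of_mem (Finset.mem_univ j₀)]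
      have h2 := Finset.add_sum_erase Finset.univ e (Finset.mem_univ j₀)
      rw [Finset.sdiff_singleton_eq_erase]
      omega
    obtain ⟨W', e'', c', hc', hW'det, hW'mem, hbd', hlead'⟩ :=
      ih (B * W₁) (Function.update e j₀ (e j₀ - 1)) d₀ hdet' hdeg' (by
        rw [hsum']
        omega)
    have hW₁mem : ∀ i j, W₁ i j ∈ Algebra.adjoin k {(T 1 : LaurentPolynomial k)} := by
      intro i j
      rcases eq_or_ne j j₀ with rfl | hj
      · rw [hW₁, Matrix.updateCol_self, hw]
        refine mem_adjoin_T_pos fun m hm => ?_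
        show sg (e j - e i) (lam i) m = 0
        rw [sg_apply]
        by_cases hli : lam i = 0
        · split <;> simp [hli]
        · have : e i ≤ e j := hj₀max i (Finset.mem_filter.mpr ⟨Finset.mem_univ i, hli⟩)
          rw [if_neg (by omega)]
      · rw [hW₁, Matrix.updateCol_ne hj, Matrix.one_apply]
        split
        · exact one_mem _
        · exact zero_mem _
    refine ⟨W₁ * W', e'', lam j₀ * c', mul_ne_zero hlamj₀ hc', ?_, ?_, ?_, ?_⟩
    · rw [Matrix.det_mul, hW₁det, hW'det, ← _root_.map_mul]
    · exact entries_mul_mem hW₁mem hW'mem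
    · intro i j m hm
      rw [← Matrix.mul_assoc]
      exact hbd' i j m hm
    · simpa only [← Matrix.mul_assoc] using hlead'


theorem T_prod {ι : Type*} (s : Finset ι) (f : ι → ℤ) :
    (∏ j ∈ s, (T (f j) : LaurentPolynomial k)) = T (∑ j ∈ s, f j) := by
  induction s using Finset.cons_induction with
  | empty => rw [Finset.prod_empty, Finset.sum_empty, T_zero]
  | cons a s ha ih => rw [Finset.prod_cons, Finset.sum_cons, ih, ← T_add]

theorem perm_entry_mem {n : ℕ} (S : Subalgebra k (LaurentPolynomial k))
    (σ : Equiv.Perm (Fin n)) (i j : Fin n) :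
    (σ.toPEquiv.toMatrix : Matrix (Fin n) (Fin n) (LaurentPolynomial k)) i j ∈ S := by
  rw [PEquiv.toMatrix_apply]
  split
  · exact one_mem _
  · exact zero_mem _


end BGaux



open BGaux in
theorem birkhoff_grothendieck_laurentPolynomial_exists'
    (k : Type*) [Field k] (n : ℕ) (hn : 1 ≤ n)
    (A : GL (Fin n) (LaurentPolynomial k)) :
    ∃ (U V : GL (Fin n) (LaurentPolynomial k)) (a : Fin n → ℤ),
      (∀ i j : Fin n, (U : Matrix (Fin n) (Fin n) (LaurentPolynomial k)) i j ∈
        Algebra.adjoin k {(T (-1) : LaurentPolynomial k)}) ∧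
      (∀ i j : Fin n, ((U⁻¹ : GL (Fin n) (LaurentPolynomial k)) :
          Matrix (Fin n) (Fin n) (LaurentPolynomial k)) i j ∈
        Algebra.adjoin k {(T (-1) : LaurentPolynomial k)}) ∧
      (∀ i j : Fin n, (V : Matrix (Fin n) (Fin n) (LaurentPolynomial k)) i j ∈
        Algebra.adjoin k {(T 1 : LaurentPolynomial k)}) ∧
      (∀ i j : Fin n, ((V⁻¹ : GL (Fin n) (LaurentPolynomial k)) :
          Matrix (Fin n) (Fin n) (LaurentPolynomial k)) i j ∈
        Algebra.adjoin k {(T 1 : LaurentPolynomial k)}) ∧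
      Antitone a ∧
      (A : Matrix (Fin n) (Fin n) (LaurentPolynomial k)) =
        (U : Matrix (Fin n) (Fin n) (LaurentPolynomial k)) *
          Matrix.diagonal (fun i => (T (a i) : LaurentPolynomial k)) *
          (V : Matrix (Fin n) (Fin n) (LaurentPolynomial k)) := by
  classical
  have hAu : IsUnit (A : Matrix (Fin n) (Fin n) (LaurentPolynomial k)) := ⟨A, rfl⟩
  have hdetU : IsUnit ((A : Matrix (Fin n) (Fin n) (LaurentPolynomial k)).det) :=
    (Matrix.isUnit_iff_isUnit_det _).mp hAu
  have hdet0 : (A : Matrix (Fin n) (Fin n) (LaurentPolynomial k)).det ≠ 0 := hdetU.ne_zero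
  obtain ⟨d₀, hd₀⟩ := Finsupp.support_nonempty_iff.mpr (AddMonoidAlgebra.coeff_eq_zero.not.mpr hdet0)
  have hebd : ∀ j : Fin n, ∃ ej : ℤ, ∀ i m, ej < m →
      (A : Matrix (Fin n) (Fin n) (LaurentPolynomial k)) i j m = 0 := by
    intro j
    obtain ⟨M, hM⟩ := (Finset.univ.biUnion fun i : Fin n =>
      ((A : Matrix (Fin n) (Fin n) (LaurentPolynomial k)) i j).coeff.support).exists_le
    refine ⟨M, fun i m hm => ?_⟩
    by_contra h
    have hmem : m ∈ Finset.univ.biUnion fun i : Fin n =>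
        ((A : Matrix (Fin n) (Fin n) (LaurentPolynomial k)) i j).coeff.support :=
      Finset.mem_biUnion.mpr ⟨i, Finset.mem_univ i, Finsupp.mem_support_iff.mpr h⟩
    exact absurd (hM m hmem) (by omega)
  choose e he using hebd
  obtain ⟨W, e', c, hc, hWdet, hWmem, hbd, hlead⟩ :=
    BGaux.loop ((∑ j, e j) - d₀).toNat (A : Matrix (Fin n) (Fin n) (LaurentPolynomial k)) e d₀
      (Finsupp.mem_support_iff.mp hd₀) (fun i j m hm => he j i m hm) (Int.self_le_toNat _)
  obtain ⟨hWunit, hWinvmem⟩ := BGaux.inv_entries_mem hc hWdet hWmem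
  set U0 : Matrix (Fin n) (Fin n) (LaurentPolynomial k) :=
    (A : Matrix (Fin n) (Fin n) (LaurentPolynomial k)) * W *
      Matrix.diagonal (fun j => T (-(e' j))) with hU0def
  have hU0entry : ∀ i j x, U0 i j x =
      ((A : Matrix (Fin n) (Fin n) (LaurentPolynomial k)) * W) i j (x + e' j) := by
    intro i j x
    rw [hU0def, Matrix.mul_diagonal]
    have hT : (T (-(e' j)) : LaurentPolynomial k) = sg (-(e' j)) 1 := by
      rw [sg_eq_C_mul_T, _root_.map_one, one_mul]
    rw [hT, mul_sg_apply, mul_one]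
    congr 1
    omega
  have hU0bd : ∀ i j m, (0:ℤ) < m → U0 i j m = 0 := by
    intro i j m hm
    rw [hU0entry]
    exact hbd i j _ (by omega)
  have hU0mem : ∀ i j, U0 i j ∈ Algebra.adjoin k {(T (-1) : LaurentPolynomial k)} :=
    fun i j => mem_adjoin_T_neg (fun m hm => hU0bd i j m hm)
  have hU0lead : (Matrix.of fun i j => U0 i j 0 : Matrix (Fin n) (Fin n) k).det ≠ 0 := by
    have hEq : (Matrix.of fun i j => U0 i j 0 : Matrix (Fin n) (Fin n) k) =
        (Matrix.of fun i j =>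
          ((A : Matrix (Fin n) (Fin n) (LaurentPolynomial k)) * W) i j (e' j)) := by
      ext i j
      show U0 i j 0 = _
      rw [hU0entry, zero_add]
      rfl
    rw [hEq]
    exact hlead
  have hU0detunit : IsUnit U0.det := by
    have h1 : U0.det = (A : Matrix (Fin n) (Fin n) (LaurentPolynomial k)).det * W.det *
        (Matrix.diagonal fun j => (T (-(e' j)) : LaurentPolynomial k)).det := by
      rw [hU0def, Matrix.det_mul, Matrix.det_mul]
    rw [h1, Matrix.det_diagonal, T_prod]
    exact (hdetU.mul hWunit).mul (isUnit_T _)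
  have hU0detbd : ∀ m, (0:ℤ) < m → U0.det m = 0 := by
    intro m hm
    refine det_coeff_bound U0 (fun _ => 0) hU0bd m ?_
    simpa using hm
  have hU0dettop : U0.det 0 ≠ 0 := by
    have h1 := det_coeff_top U0 (fun _ => 0) hU0bd
    rw [show (∑ _j : Fin n, (0:ℤ)) = 0 by simp] at h1
    rw [h1]
    exact hU0lead
  have hU0detC : U0.det = C (U0.det 0) := unit_eq_C hU0detunit hU0detbd hU0dettop
  obtain ⟨hU0unit, hU0invmem⟩ := inv_entries_mem hU0dettop hU0detC hU0mem
  -- main identity before sorting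
  have hdiag : Matrix.diagonal (fun j => (T (-(e' j)) : LaurentPolynomial k)) *
      Matrix.diagonal (fun j => (T (e' j) : LaurentPolynomial k)) = 1 := by
    rw [Matrix.diagonal_mul_diagonal]
    rw [show (fun j => (T (-(e' j)) : LaurentPolynomial k) * T (e' j)) =
        fun _ => (1 : LaurentPolynomial k) from funext fun j => by
      rw [← T_add, neg_add_cancel, T_zero]]
    exact Matrix.diagonal_one
  have hmain : (A : Matrix (Fin n) (Fin n) (LaurentPolynomial k)) =
      U0 * Matrix.diagonal (fun j => (T (e' j) : LaurentPolynomial k)) * W⁻¹ := by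
    rw [hU0def, Matrix.mul_assoc ((A : Matrix (Fin n) (Fin n) (LaurentPolynomial k)) * W),
      hdiag, Matrix.mul_one, Matrix.mul_assoc, Matrix.mul_nonsing_inv W hWunit,
      Matrix.mul_one]
  -- sorting
  obtain ⟨π, hanti⟩ : ∃ π : Equiv.Perm (Fin n), Antitone (fun i => e' (π i)) := by
    refine ⟨Tuple.sort (fun i => -(e' i)), fun i j hij => ?_⟩
    have h2 := Tuple.monotone_sort (fun i => -(e' i)) hij
    simp only [Function.comp_apply] at h2
    dsimp only
    omega
  set P1 : Matrix (Fin n) (Fin n) (LaurentPolynomial k) := π.symm.toPEquiv.toMatrix with hP1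
  set P2 : Matrix (Fin n) (Fin n) (LaurentPolynomial k) := π.toPEquiv.toMatrix with hP2
  have hP12 : P1 * P2 = 1 := by
    rw [hP1, hP2, ← PEquiv.toMatrix_trans, ← Equiv.toPEquiv_trans,
      Equiv.symm_trans_self, Equiv.toPEquiv_refl, PEquiv.toMatrix_refl]
  have hP21 : P2 * P1 = 1 := by
    rw [hP1, hP2, ← PEquiv.toMatrix_trans, ← Equiv.toPEquiv_trans,
      Equiv.self_trans_symm, Equiv.toPEquiv_refl, PEquiv.toMatrix_refl]
  have hconj : P1 * Matrix.diagonal (fun i => (T (e' (π i)) : LaurentPolynomial k)) * P2 =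
      Matrix.diagonal (fun j => (T (e' j) : LaurentPolynomial k)) := by
    rw [hP1, hP2, PEquiv.toMatrix_toPEquiv_mul, PEquiv.mul_toMatrix_toPEquiv,
      Matrix.submatrix_submatrix]
    refine Matrix.ext fun i j => ?_
    rw [Matrix.submatrix_apply]
    simp only [Function.comp_apply, id_eq]
    rcases eq_or_ne i j with rfl | hij
    · rw [Matrix.diagonal_apply_eq, Matrix.diagonal_apply_eq, Equiv.apply_symm_apply]
    · rw [Matrix.diagonal_apply_ne _ (fun hcon => hij (π.symm.injective hcon)),
        Matrix.diagonal_apply_ne _ hij]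
  have hP1unit : IsUnit P1 := ⟨⟨P1, P2, hP12, hP21⟩, rfl⟩
  have hP2unit : IsUnit P2 := ⟨⟨P2, P1, hP21, hP12⟩, rfl⟩
  have hUfinUnit : IsUnit (U0 * P1) :=
    ((Matrix.isUnit_iff_isUnit_det _).mpr hU0unit).mul hP1unit
  have hVfinUnit : IsUnit (P2 * W⁻¹) :=
    hP2unit.mul ((Matrix.isUnit_iff_isUnit_det _).mpr (W.isUnit_nonsing_inv_det hWunit))
  refine ⟨hUfinUnit.unit, hVfinUnit.unit, fun i => e' (π i), ?_, ?_, ?_, ?_, hanti, ?_⟩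
  · intro i j
    rw [show ((hUfinUnit.unit : GL (Fin n) (LaurentPolynomial k)) :
        Matrix (Fin n) (Fin n) (LaurentPolynomial k)) = U0 * P1 from hUfinUnit.unit_spec]
    exact entries_mul_mem hU0mem (fun i j => perm_entry_mem _ _ i j) i j
  · intro i j
    rw [show ((hUfinUnit.unit⁻¹ : GL (Fin n) (LaurentPolynomial k)) :
        Matrix (Fin n) (Fin n) (LaurentPolynomial k)) = (U0 * P1)⁻¹ by
      rw [Matrix.coe_units_inv, hUfinUnit.unit_spec]]
    rw [Matrix.mul_inv_rev, Matrix.inv_eq_right_inv hP12]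
    exact entries_mul_mem (fun i j => perm_entry_mem _ _ i j) hU0invmem i j
  · intro i j
    rw [show ((hVfinUnit.unit : GL (Fin n) (LaurentPolynomial k)) :
        Matrix (Fin n) (Fin n) (LaurentPolynomial k)) = P2 * W⁻¹ from hVfinUnit.unit_spec]
    exact entries_mul_mem (fun i j => perm_entry_mem _ _ i j) hWinvmem i j
  · intro i j
    rw [show ((hVfinUnit.unit⁻¹ : GL (Fin n) (LaurentPolynomial k)) :
        Matrix (Fin n) (Fin n) (LaurentPolynomial k)) = (P2 * W⁻¹)⁻¹ by
      rw [Matrix.coe_units_inv, hVfinUnit.unit_spec]]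
    rw [Matrix.mul_inv_rev, Matrix.nonsing_inv_nonsing_inv W hWunit,
      Matrix.inv_eq_right_inv hP21]
    exact entries_mul_mem hWmem (fun i j => perm_entry_mem _ _ i j) i j
  · rw [show ((hUfinUnit.unit : GL (Fin n) (LaurentPolynomial k)) :
        Matrix (Fin n) (Fin n) (LaurentPolynomial k)) = U0 * P1 from hUfinUnit.unit_spec]
    rw [show ((hVfinUnit.unit : GL (Fin n) (LaurentPolynomial k)) :
        Matrix (Fin n) (Fin n) (LaurentPolynomial k)) = P2 * W⁻¹ from hVfinUnit.unit_spec]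
    rw [hmain, ← hconj]
    simp only [Matrix.mul_assoc]

/-- **Birkhoff–Grothendieck factorization over Laurent polynomials.**
Every invertible matrix over `k[T,T⁻¹]` factors as `U * diag(T^aᵢ) * V` with `U, U⁻¹`
having entries in the subalgebra generated by `T⁻¹`, `V, V⁻¹` having entries in the
subalgebra generated by `T`, and `a` a nonincreasing sequence of integers. -/
theorem birkhoff_grothendieck_laurentPolynomial_exists
    (k : Type*) [Field k] (n : ℕ) (hn : 1 ≤ n)
    (A : GL (Fin n) (LaurentPolynomial k)) :
    ∃ (U V : GL (Fin n) (LaurentPolynomial k)) (a : Fin n → ℤ),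
      (∀ i j : Fin n, (U : Matrix (Fin n) (Fin n) (LaurentPolynomial k)) i j ∈
        Algebra.adjoin k {(T (-1) : LaurentPolynomial k)}) ∧
      (∀ i j : Fin n, ((U⁻¹ : GL (Fin n) (LaurentPolynomial k)) :
          Matrix (Fin n) (Fin n) (LaurentPolynomial k)) i j ∈
        Algebra.adjoin k {(T (-1) : LaurentPolynomial k)}) ∧
      (∀ i j : Fin n, (V : Matrix (Fin n) (Fin n) (LaurentPolynomial k)) i j ∈
        Algebra.adjoin k {(T 1 : LaurentPolynomial k)}) ∧
      (∀ i j : Fin n, ((V⁻¹ : GL (Fin n) (LaurentPolynomial k)) :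
          Matrix (Fin n) (Fin n) (LaurentPolynomial k)) i j ∈
        Algebra.adjoin k {(T 1 : LaurentPolynomial k)}) ∧
      Antitone a ∧
      (A : Matrix (Fin n) (Fin n) (LaurentPolynomial k)) =
        (U : Matrix (Fin n) (Fin n) (LaurentPolynomial k)) *
          Matrix.diagonal (fun i => (T (a i) : LaurentPolynomial k)) *
          (V : Matrix (Fin n) (Fin n) (LaurentPolynomial k)) := by
  exact birkhoff_grothendieck_laurentPolynomial_exists' k n hn A
end

section
/- Let k be a field and n ≥ 1 a natural number. Suppose a matrix A ∈ GL_n(k[T,T⁻¹]) admits two factorizations A = U · diag(T^{a₁}, …, T^{a_n}) · V = U′ · diag(T^{b₁}, …, T^{b_n}) · V′, where a₁ ≥ … ≥ a_n and b₁ ≥ … ≥ b_n are nonincreasing sequences of integers, U and U′ (together with their inverses) have entries in the k-subalgebra of k[T,T⁻¹] generated by T⁻¹, and V and V′ (together with their inverses) have entries in the k-subalgebra generated by T. Then a_i = b_i for all i = 1, …, n. (Uniqueness of the splitting type in the Birkhoff–Grothendieck factorization over Laurent polynomials.) -/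
open Matrix LaurentPolynomial

private lemma bg_adjoin_support {k : Type*} [Field k] (d : ℤ) (S : AddSubmonoid ℤ) (hd : d ∈ S)
    {p : LaurentPolynomial k} (hp : p ∈ Algebra.adjoin k {(T d : LaurentPolynomial k)}) :
    ∀ m : ℤ, p.coeff m ≠ 0 → m ∈ S := by
  induction hp using Algebra.adjoin_induction with
  | mem x hx =>
      rcases Set.mem_singleton_iff.mp hx with rfl
      intro m hm
      rw [T_apply] at hm
      by_cases h : d = m
      · exact h ▸ hd
      · simp [h] at hm
  | algebraMap r =>
      intro m hm
      rw [← C_eq_algebraMap, C_apply] at hm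
      by_cases h : m = 0
      · exact h ▸ S.zero_mem
      · simp [h] at hm
  | add x y hx hy ihx ihy =>
      intro m hm
      rw [AddMonoidAlgebra.coeff_add, Finsupp.add_apply] at hm
      by_cases h : x.coeff m ≠ 0
      · exact ihx m h
      · push_neg at h
        exact ihy m (by intro h'; rw [h, h', add_zero] at hm; exact hm rfl)
  | mul x y hx hy ihx ihy =>
      intro m hm
      have hmem : m ∈ (x * y).coeff.support := Finsupp.mem_support_iff.mpr hm
      have h2 := AddMonoidAlgebra.support_coeff_mul_subset x y hmem
      rw [Finset.mem_add] at h2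
      obtain ⟨u, hu, v, hv, rfl⟩ := h2
      exact S.add_mem (ihx u (Finsupp.mem_support_iff.mp hu))
        (ihy v (Finsupp.mem_support_iff.mp hv))


private lemma bg_zero_block {F : Type*} [Field F] {n : ℕ} (M : Matrix (Fin n) (Fin n) F)
    (hM : IsUnit M) (P Q : Fin n → Prop) [DecidablePred P] [DecidablePred Q]
    (hz : ∀ i j, P i → Q j → M i j = 0) :
    (Finset.univ.filter P).card + (Finset.univ.filter Q).card ≤ n := by
  have li : LinearIndependent F (fun i : Fin n => M i) :=
    Matrix.linearIndependent_rows_iff_isUnit.mpr hM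
  have li1 : LinearIndependent F (fun i : {i // P i} => M i.1) :=
    li.comp _ Subtype.val_injective
  have li2 : LinearIndependent F (fun i : {i // P i} => fun j : {j // ¬ Q j} => M i.1 j.1) := by
    rw [Fintype.linearIndependent_iff] at li1 ⊢
    intro g hg i
    refine li1 g ?_ i
    funext j
    by_cases hj : Q j
    · have hzz : ∀ i : {i // P i}, M i.1 j = 0 := fun i => hz i.1 j i.2 hj
      simp [Finset.sum_apply, hzz]
    · have h := congrFun hg ⟨j, hj⟩
      simpa [Finset.sum_apply] using h
  have hcard := li2.fintype_card_le_finrank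
  rw [Module.finrank_pi, Fintype.card_subtype, Fintype.card_subtype] at hcard
  have h3 := Finset.card_filter_add_card_filter_not (s := (Finset.univ : Finset (Fin n)))
    (p := Q)
  simp only [Finset.card_univ, Fintype.card_fin] at h3
  have e1 : Finset.filter P Finset.univ = Finset.filter (fun x => P x) Finset.univ := rfl
  have e2 : Finset.filter Q Finset.univ = Finset.filter (fun x => Q x) Finset.univ := rfl
  rw [e1, e2] at *
  omega


private def bgNonpos : AddSubmonoid ℤ where
  carrier := {m | m ≤ 0}
  zero_mem' := by simp
  add_mem' := fun ha hb => by simpa using add_nonpos ha hb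

@[simp] private lemma bgNonpos_mem (m : ℤ) : m ∈ bgNonpos ↔ m ≤ 0 := by
  constructor
  · intro h; exact h
  · intro h; exact h

private lemma bg_count {k : Type*} [Field k] {n : ℕ}
    (U V U' V' : GL (Fin n) (LaurentPolynomial k)) (a b : Fin n → ℤ)
    (hU : ∀ i j : Fin n, (U : Matrix (Fin n) (Fin n) (LaurentPolynomial k)) i j ∈
      Algebra.adjoin k {(T (-1) : LaurentPolynomial k)})
    (hU'inv : ∀ i j : Fin n, ((U'⁻¹ : GL (Fin n) (LaurentPolynomial k)) :
        Matrix (Fin n) (Fin n) (LaurentPolynomial k)) i j ∈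
      Algebra.adjoin k {(T (-1) : LaurentPolynomial k)})
    (hV' : ∀ i j : Fin n, (V' : Matrix (Fin n) (Fin n) (LaurentPolynomial k)) i j ∈
      Algebra.adjoin k {(T 1 : LaurentPolynomial k)})
    (hVinv : ∀ i j : Fin n, ((V⁻¹ : GL (Fin n) (LaurentPolynomial k)) :
        Matrix (Fin n) (Fin n) (LaurentPolynomial k)) i j ∈
      Algebra.adjoin k {(T 1 : LaurentPolynomial k)})
    (hfac : (U : Matrix (Fin n) (Fin n) (LaurentPolynomial k)) *
        Matrix.diagonal (fun i => (T (a i) : LaurentPolynomial k)) *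
        (V : Matrix (Fin n) (Fin n) (LaurentPolynomial k)) =
      (U' : Matrix (Fin n) (Fin n) (LaurentPolynomial k)) *
        Matrix.diagonal (fun i => (T (b i) : LaurentPolynomial k)) *
        (V' : Matrix (Fin n) (Fin n) (LaurentPolynomial k)))
    (t : ℤ) :
    (Finset.univ.filter fun i => t ≤ b i).card ≤ (Finset.univ.filter fun j => t ≤ a j).card := by
  set R := LaurentPolynomial k
  set Da : Matrix (Fin n) (Fin n) R := Matrix.diagonal (fun i => (T (a i) : R)) with hDa
  set Db : Matrix (Fin n) (Fin n) R := Matrix.diagonal (fun i => (T (b i) : R)) with hDb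
  set Mm : Matrix (Fin n) (Fin n) R := ((U'⁻¹ : GL (Fin n) R) : Matrix (Fin n) (Fin n) R) *
    (U : Matrix (Fin n) (Fin n) R) with hMm
  set Nm : Matrix (Fin n) (Fin n) R := (V' : Matrix (Fin n) (Fin n) R) *
    ((V⁻¹ : GL (Fin n) R) : Matrix (Fin n) (Fin n) R) with hNm
  have hVV : (V : Matrix (Fin n) (Fin n) R) * ((V⁻¹ : GL (Fin n) R) : Matrix (Fin n) (Fin n) R)
      = 1 := by
    rw [← Units.val_mul, mul_inv_cancel, Units.val_one]
  have hU'U' : ((U'⁻¹ : GL (Fin n) R) : Matrix (Fin n) (Fin n) R) *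
      (U' : Matrix (Fin n) (Fin n) R) = 1 := by
    rw [← Units.val_mul, inv_mul_cancel, Units.val_one]
  have key : Mm * Da = Db * Nm := by
    have e1 : ((U'⁻¹ : GL (Fin n) R) : Matrix (Fin n) (Fin n) R) *
        ((U : Matrix (Fin n) (Fin n) R) * Da * (V : Matrix (Fin n) (Fin n) R)) *
        ((V⁻¹ : GL (Fin n) R) : Matrix (Fin n) (Fin n) R) =
        ((U'⁻¹ : GL (Fin n) R) : Matrix (Fin n) (Fin n) R) *
        ((U' : Matrix (Fin n) (Fin n) R) * Db * (V' : Matrix (Fin n) (Fin n) R)) *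
        ((V⁻¹ : GL (Fin n) R) : Matrix (Fin n) (Fin n) R) := by rw [hfac]
    calc Mm * Da = Mm * Da * ((V : Matrix (Fin n) (Fin n) R) *
            ((V⁻¹ : GL (Fin n) R) : Matrix (Fin n) (Fin n) R)) := by
          rw [hVV, Matrix.mul_one]
      _ = ((U'⁻¹ : GL (Fin n) R) : Matrix (Fin n) (Fin n) R) *
            ((U : Matrix (Fin n) (Fin n) R) * Da * (V : Matrix (Fin n) (Fin n) R)) *
            ((V⁻¹ : GL (Fin n) R) : Matrix (Fin n) (Fin n) R) := by
          simp only [hMm, Matrix.mul_assoc]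
      _ = ((U'⁻¹ : GL (Fin n) R) : Matrix (Fin n) (Fin n) R) *
            ((U' : Matrix (Fin n) (Fin n) R) * Db * (V' : Matrix (Fin n) (Fin n) R)) *
            ((V⁻¹ : GL (Fin n) R) : Matrix (Fin n) (Fin n) R) := e1
      _ = (((U'⁻¹ : GL (Fin n) R) : Matrix (Fin n) (Fin n) R) *
            (U' : Matrix (Fin n) (Fin n) R)) * Db * Nm := by
          simp only [hNm, Matrix.mul_assoc]
      _ = Db * Nm := by rw [hU'U', Matrix.one_mul]
  -- entrywise relation
  have keyij : ∀ i j, Mm i j * (T (a j) : R) = (T (b i) : R) * Nm i j := by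
    intro i j
    have e : (Mm * Da) i j = (Db * Nm) i j := by rw [key]
    rwa [hDa, hDb, Matrix.mul_diagonal, Matrix.diagonal_mul] at e
  -- supports
  have vanish : ∀ i j, a j < b i → Nm i j = 0 := by
    intro i j hab
    have hNmem : Nm i j ∈ Algebra.adjoin k {(T 1 : R)} := by
      rw [hNm, Matrix.mul_apply]
      exact Subalgebra.sum_mem _ fun l _ => Subalgebra.mul_mem _ (hV' i l) (hVinv l j)
    have hMmem : Mm i j ∈ Algebra.adjoin k {(T (-1) : R)} := by
      rw [hMm, Matrix.mul_apply]
      exact Subalgebra.sum_mem _ fun l _ => Subalgebra.mul_mem _ (hU'inv i l) (hU l j)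
    have hNsupp := bg_adjoin_support 1 (AddSubmonoid.nonneg ℤ) (by simp) hNmem
    have hMsupp := bg_adjoin_support (-1) bgNonpos (by simp) hMmem
    refine AddMonoidAlgebra.ext (Finsupp.ext fun m => ?_)
    simp only [AddMonoidAlgebra.coeff_zero, Finsupp.coe_zero, Pi.zero_apply]
    by_contra hm0
    have hm : (0:ℤ) ≤ m := by simpa using hNsupp m hm0
    have e2 := congrArg (fun p : R => p.coeff (b i + m)) (keyij i j)
    rw [show (T (a j) : R) = AddMonoidAlgebra.single (a j) (1:k) from rfl,
        AddMonoidAlgebra.coeff_mul_single_apply, mul_one] at e2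
    rw [show (T (b i) : R) = AddMonoidAlgebra.single (b i) (1:k) from rfl,
        AddMonoidAlgebra.coeff_single_mul_apply, one_mul, neg_add_cancel_left, ← sub_eq_add_neg] at e2
    have hms := hMsupp (b i + m - a j) (by rw [e2]; exact hm0)
    simp only [bgNonpos_mem] at hms
    omega
  have hNunit : IsUnit Nm := by
    have hh : Nm = ((V' * V⁻¹ : GL (Fin n) R) : Matrix (Fin n) (Fin n) R) := by
      rw [hNm, Units.val_mul]
    rw [hh]; exact Units.isUnit _
  set F := FractionRing R with hF
  set φ := algebraMap R F with hφ
  have hNF : IsUnit (Nm.map φ) := by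
    have hh := hNunit.map (RingHom.mapMatrix (φ : R →+* F))
    rwa [RingHom.mapMatrix_apply] at hh
  have hblock := bg_zero_block (Nm.map φ) hNF (fun i => t ≤ b i) (fun j => a j < t)
    (fun i j hbi haj => by
      rw [Matrix.map_apply, vanish i j (lt_of_lt_of_le haj hbi), map_zero])
  have h4 := Finset.card_filter_add_card_filter_not (s := (Finset.univ : Finset (Fin n)))
    (p := fun j => t ≤ a j)
  simp only [Finset.card_univ, Fintype.card_fin, not_le] at h4
  omega

/-- **Uniqueness of the splitting type in the Birkhoff–Grothendieck factorization
over Laurent polynomials.** If an invertible matrix over `k[T,T⁻¹]` admits two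
factorizations `U * diag(T^aᵢ) * V = U' * diag(T^bᵢ) * V'` with nonincreasing exponent
sequences, where `U, U', U⁻¹, U'⁻¹` have entries in the subalgebra generated by `T⁻¹` and
`V, V', V⁻¹, V'⁻¹` have entries in the subalgebra generated by `T`, then `a = b`. -/
theorem birkhoff_grothendieck_laurentPolynomial_unique
    (k : Type*) [Field k] (n : ℕ) (hn : 1 ≤ n)
    (A U V U' V' : GL (Fin n) (LaurentPolynomial k)) (a b : Fin n → ℤ)
    (ha : Antitone a) (hb : Antitone b)
    (hU : ∀ i j : Fin n, (U : Matrix (Fin n) (Fin n) (LaurentPolynomial k)) i j ∈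
      Algebra.adjoin k {(T (-1) : LaurentPolynomial k)})
    (hUinv : ∀ i j : Fin n, ((U⁻¹ : GL (Fin n) (LaurentPolynomial k)) :
        Matrix (Fin n) (Fin n) (LaurentPolynomial k)) i j ∈
      Algebra.adjoin k {(T (-1) : LaurentPolynomial k)})
    (hU' : ∀ i j : Fin n, (U' : Matrix (Fin n) (Fin n) (LaurentPolynomial k)) i j ∈
      Algebra.adjoin k {(T (-1) : LaurentPolynomial k)})
    (hU'inv : ∀ i j : Fin n, ((U'⁻¹ : GL (Fin n) (LaurentPolynomial k)) :
        Matrix (Fin n) (Fin n) (LaurentPolynomial k)) i j ∈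
      Algebra.adjoin k {(T (-1) : LaurentPolynomial k)})
    (hV : ∀ i j : Fin n, (V : Matrix (Fin n) (Fin n) (LaurentPolynomial k)) i j ∈
      Algebra.adjoin k {(T 1 : LaurentPolynomial k)})
    (hVinv : ∀ i j : Fin n, ((V⁻¹ : GL (Fin n) (LaurentPolynomial k)) :
        Matrix (Fin n) (Fin n) (LaurentPolynomial k)) i j ∈
      Algebra.adjoin k {(T 1 : LaurentPolynomial k)})
    (hV' : ∀ i j : Fin n, (V' : Matrix (Fin n) (Fin n) (LaurentPolynomial k)) i j ∈
      Algebra.adjoin k {(T 1 : LaurentPolynomial k)})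
    (hV'inv : ∀ i j : Fin n, ((V'⁻¹ : GL (Fin n) (LaurentPolynomial k)) :
        Matrix (Fin n) (Fin n) (LaurentPolynomial k)) i j ∈
      Algebra.adjoin k {(T 1 : LaurentPolynomial k)})
    (hfac : (A : Matrix (Fin n) (Fin n) (LaurentPolynomial k)) =
      (U : Matrix (Fin n) (Fin n) (LaurentPolynomial k)) *
        Matrix.diagonal (fun i => (T (a i) : LaurentPolynomial k)) *
        (V : Matrix (Fin n) (Fin n) (LaurentPolynomial k)))
    (hfac' : (A : Matrix (Fin n) (Fin n) (LaurentPolynomial k)) =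
      (U' : Matrix (Fin n) (Fin n) (LaurentPolynomial k)) *
        Matrix.diagonal (fun i => (T (b i) : LaurentPolynomial k)) *
        (V' : Matrix (Fin n) (Fin n) (LaurentPolynomial k))) :
    ∀ i : Fin n, a i = b i := by
  intro i
  by_contra hne
  have e := hfac.symm.trans hfac'
  rcases lt_or_gt_of_ne hne with h | h
  · -- a i < b i
    have hc := bg_count U V U' V' a b hU hU'inv hV' hVinv e (b i)
    have hlow : (i : ℕ) + 1 ≤ (Finset.univ.filter fun j => b i ≤ b j).card := by
      have hsub : Finset.Iic i ⊆ Finset.univ.filter fun j => b i ≤ b j := by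
        intro j hj
        simp only [Finset.mem_filter, Finset.mem_univ, true_and]
        exact hb (Finset.mem_Iic.mp hj)
      calc (i : ℕ) + 1 = (Finset.Iic i).card := (Fin.card_Iic i).symm
        _ ≤ _ := Finset.card_le_card hsub
    have hup : (Finset.univ.filter fun j => b i ≤ a j).card ≤ (i : ℕ) := by
      have hsub : (Finset.univ.filter fun j => b i ≤ a j) ⊆ Finset.Iio i := by
        intro j hj
        simp only [Finset.mem_filter, Finset.mem_univ, true_and] at hj
        rw [Finset.mem_Iio]
        by_contra hji
        push_neg at hji
        have := ha hji
        omega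
      calc _ ≤ (Finset.Iio i).card := Finset.card_le_card hsub
        _ = (i : ℕ) := Fin.card_Iio i
    omega
  · -- b i < a i
    have hc := bg_count U' V' U V b a hU' hUinv hV hV'inv e.symm (a i)
    have hlow : (i : ℕ) + 1 ≤ (Finset.univ.filter fun j => a i ≤ a j).card := by
      have hsub : Finset.Iic i ⊆ Finset.univ.filter fun j => a i ≤ a j := by
        intro j hj
        simp only [Finset.mem_filter, Finset.mem_univ, true_and]
        exact ha (Finset.mem_Iic.mp hj)
      calc (i : ℕ) + 1 = (Finset.Iic i).card := (Fin.card_Iic i).symm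
        _ ≤ _ := Finset.card_le_card hsub
    have hup : (Finset.univ.filter fun j => a i ≤ b j).card ≤ (i : ℕ) := by
      have hsub : (Finset.univ.filter fun j => a i ≤ b j) ⊆ Finset.Iio i := by
        intro j hj
        simp only [Finset.mem_filter, Finset.mem_univ, true_and] at hj
        rw [Finset.mem_Iio]
        by_contra hji
        push_neg at hji
        have := hb hji
        omega
      calc _ ≤ (Finset.Iio i).card := Finset.card_le_card hsub
        _ = (i : ℕ) := Fin.card_Iio i
    omega
end
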